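/- If x and y are commuting elements of order 2 in SO(3) with x ≠ y, then for any lifts x̃, ỹ of x, y in SU(2) under the double cover SU(2) → SO(3), the commutator [x̃, ỹ] equals -I. -/

import Mathlib

open Matrix
open scoped commutatorElement

/-- `SU2` : the special unitary group of 2×2 complex matrices, as a subgroup of the
unitary group. -/
def SU2 : Subgroup (Matrix.unitaryGroup (Fin 2) ℂ) :=
  MonoidHom.ker (Matrix.detMonoidHom.comp (Submonoid.subtype _))

/-- Build an element of `SU2` from a unitary matrix of determinant one. -/
def mkSU2 (M : Matrix (Fin 2) (Fin 2) ℂ) (hU : M ∈ Matrix.unitaryGroup (Fin 2) ℂ)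
    (hdet : M.det = 1) : SU2 :=
  ⟨⟨M, hU⟩, MonoidHom.mem_ker.mpr hdet⟩

/-- `-I₂` as an element of `SU2`. -/
def negOne : SU2 :=
  mkSU2 (-1) (by rw [Matrix.mem_unitaryGroup_iff]; simp)
    (by simp [Matrix.det_neg])

lemma negOne_comm (g : SU2) : Commute g negOne := by
  apply Subtype.ext; apply Subtype.ext
  show (g.1.1 : Matrix (Fin 2) (Fin 2) ℂ) * (-1) = (-1) * g.1.1
  simp

instance : (Subgroup.zpowers negOne).Normal := by
  constructor
  intro n hn g
  obtain ⟨k, rfl⟩ := hn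
  show g * negOne ^ k * g⁻¹ ∈ Subgroup.zpowers negOne
  have h2 : g * negOne ^ k * g⁻¹ = negOne ^ k := by
    rw [((negOne_comm g).zpow_right k).eq, mul_assoc, mul_inv_cancel, mul_one]
  rw [h2]
  exact Subgroup.zpow_mem_zpowers negOne k

/-- The double cover projection `SU2 → SO3 = SU2/{±1}`. -/
def piSU2 : SU2 →* SU2 ⧸ Subgroup.zpowers negOne := QuotientGroup.mk' _

/- ### Auxiliary lemmas -/

section aux

variable {R : Type*} [CommRing R]

/-- Cayley–Hamilton for a 2×2 matrix of determinant one. -/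
lemma CH2 (M : Matrix (Fin 2) (Fin 2) R) (hdet : M.det = 1) :
    M * M = (Matrix.trace M) • M - 1 := by
  obtain ⟨a, b, c, d, rfl⟩ : ∃ a b c d, M = !![a,b;c,d] := ⟨_, _, _, _, Matrix.eta_fin_two M⟩
  rw [Matrix.det_fin_two_of] at hdet
  ext i j
  fin_cases i <;> fin_cases j <;>
    simp [Matrix.mul_apply, Fin.sum_univ_two, Matrix.trace_fin_two, Matrix.one_apply] <;>
    first
      | ring1
      | linear_combination (-1 : R) * hdet

/-- Polarized Cayley–Hamilton: anticommutator of traceless 2×2 matrices is scalar. -/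
lemma polar2 (X Y : Matrix (Fin 2) (Fin 2) R) (hX : Matrix.trace X = 0)
    (hY : Matrix.trace Y = 0) :
    X * Y + Y * X = (Matrix.trace (X * Y)) • 1 := by
  obtain ⟨a, b, c, d, rfl⟩ : ∃ a b c d, X = !![a,b;c,d] := ⟨_, _, _, _, Matrix.eta_fin_two X⟩
  obtain ⟨p, q, r, s, rfl⟩ : ∃ p q r s, Y = !![p,q;r,s] := ⟨_, _, _, _, Matrix.eta_fin_two Y⟩
  rw [Matrix.trace_fin_two_of] at hX hY
  ext i j
  fin_cases i <;> fin_cases j <;>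
    simp [Matrix.mul_apply, Fin.sum_univ_two, Matrix.trace_fin_two, Matrix.one_apply] <;>
    first
      | linear_combination p * hX - d * hY
      | linear_combination s * hX - a * hY
      | linear_combination q * hX + b * hY
      | linear_combination r * hX + c * hY

end aux

/-- The underlying matrix of an element of `SU2`. -/
def matOf (g : SU2) : Matrix (Fin 2) (Fin 2) ℂ := g.1.1

lemma matOf_mul (g h : SU2) : matOf (g * h) = matOf g * matOf h := rfl

lemma matOf_one : matOf 1 = 1 := rfl

lemma matOf_negOne : matOf negOne = -1 := rfl

lemma matOf_injective : Function.Injective matOf := fun _ _ e => Subtype.ext (Subtype.ext e)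

lemma detOf (g : SU2) : (matOf g).det = 1 := g.2

lemma negOne_sq : negOne * negOne = 1 := by
  apply matOf_injective
  rw [matOf_mul, matOf_negOne, matOf_one]
  simp

lemma eq_one_or_negOne_of_mem_zpowers {g : SU2} (h : g ∈ Subgroup.zpowers negOne) :
    g = 1 ∨ g = negOne := by
  obtain ⟨k, rfl⟩ := h
  show negOne ^ k = 1 ∨ negOne ^ k = negOne
  have h2 : negOne ^ (2 : ℤ) = 1 := by
    rw [zpow_two]; exact negOne_sq
  rcases Int.even_or_odd k with ⟨m, hm⟩ | ⟨m, hm⟩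
  · left
    rw [hm, show m + m = 2 * m by ring, _root_.zpow_mul, h2, _root_.one_zpow]
  · right
    rw [hm, _root_.zpow_add, _root_.zpow_mul, h2, _root_.one_zpow, one_mul, zpow_one]

lemma piSU2_eq_one_iff (g : SU2) : piSU2 g = 1 ↔ g ∈ Subgroup.zpowers negOne :=
  QuotientGroup.eq_one_iff g

lemma piSU2_negOne : piSU2 negOne = 1 :=
  (piSU2_eq_one_iff negOne).mpr (Subgroup.mem_zpowers negOne)

lemma complex_sq_cases {c : ℂ} (h : c * c = 1) : c = 1 ∨ c = -1 := by
  have h0 : (c - 1) * (c + 1) = 0 := by ring_nf; linear_combination h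
  rcases mul_eq_zero.mp h0 with h1 | h1
  · exact Or.inl (sub_eq_zero.mp h1)
  · exact Or.inr (eq_neg_of_add_eq_zero_left h1)

/-- In SU(2), the only square roots of the identity are `±1`. -/
lemma sq_eq_one_cases {g : SU2} (h : g * g = 1) : g = 1 ∨ g = negOne := by
  have hdet := detOf g
  have hMM : matOf g * matOf g = 1 := by rw [← matOf_mul, h, matOf_one]
  have hch := CH2 (matOf g) hdet
  rw [hMM] at hch
  set t : ℂ := Matrix.trace (matOf g) with ht
  have htr : t • matOf g = (2 : ℂ) • (1 : Matrix (Fin 2) (Fin 2) ℂ) := by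
    have h' : t • matOf g - 1 = 1 := hch.symm
    rw [sub_eq_iff_eq_add] at h'
    rw [h', two_smul]
  have ht2 : t * t = 2 * 2 := by
    have h' := congrArg Matrix.trace htr
    rw [Matrix.trace_smul, Matrix.trace_smul, Matrix.trace_one, ← ht] at h'
    simpa [smul_eq_mul] using h'
  have htne : t ≠ 0 := by
    intro h0; rw [h0] at ht2; norm_num at ht2
  have hMval : matOf g = (t⁻¹ * 2) • (1 : Matrix (Fin 2) (Fin 2) ℂ) := by
    have h' := congrArg (fun N => t⁻¹ • N) htr
    simpa [smul_smul, inv_mul_cancel₀ htne] using h'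
  set c : ℂ := t⁻¹ * 2 with hc
  have hc2 : c * c = 1 := by
    have hd := detOf g
    rw [hMval, Matrix.det_smul, Matrix.det_one, mul_one] at hd
    rw [← sq]
    simpa [Fintype.card_fin] using hd
  rcases complex_sq_cases hc2 with h1 | h1
  · left
    apply matOf_injective
    rw [hMval, h1, one_smul, matOf_one]
  · right
    apply matOf_injective
    rw [hMval, h1, matOf_negOne]
    simp

/-- An element of SU(2) squaring to `-1` has trace zero. -/
lemma trace_eq_zero_of_sq_eq_negOne {g : SU2} (h : g * g = negOne) :
    Matrix.trace (matOf g) = 0 := by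
  have hdet := detOf g
  have hMM : matOf g * matOf g = -1 := by rw [← matOf_mul, h, matOf_negOne]
  have hch := CH2 (matOf g) hdet
  rw [hMM] at hch
  have h0 : (Matrix.trace (matOf g)) • matOf g = 0 := by
    have : (Matrix.trace (matOf g)) • matOf g - 1 + 1 = -1 + 1 := by rw [← hch]
    simpa using this
  rcases smul_eq_zero.mp h0 with h1 | h1
  · exact h1
  · exfalso
    rw [h1] at hdet
    simp at hdet

/-- If `x` and `y` are distinct commuting order-2 elements of `SO3 = SU2/{±1}`, then any
lifts `x̃`, `ỹ` to SU(2) have commutator `⁅x̃, ỹ⁆ = -I`. -/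
theorem commutator_of_lifts_of_commuting_involutions
    (x y : SU2 ⧸ Subgroup.zpowers negOne)
    (hx : orderOf x = 2) (hy : orderOf y = 2)
    (hcomm : x * y = y * x) (hxy : x ≠ y)
    (xt yt : SU2) (hxt : piSU2 xt = x) (hyt : piSU2 yt = y) :
    ⁅xt, yt⁆ = negOne := by
  -- squares of x and y are 1
  have hx2 : x * x = 1 := by
    have := pow_orderOf_eq_one x; rw [hx, sq] at this; exact this
  have hy2 : y * y = 1 := by
    have := pow_orderOf_eq_one y; rw [hy, sq] at this; exact this
  have hxne1 : x ≠ 1 := by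
    intro h; rw [h, orderOf_one] at hx; norm_num at hx
  have hyne1 : y ≠ 1 := by
    intro h; rw [h, orderOf_one] at hy; norm_num at hy
  -- lifts square to negOne
  have hxt2 : xt * xt = negOne := by
    have hmem : xt * xt ∈ Subgroup.zpowers negOne := by
      rw [← piSU2_eq_one_iff, _root_.map_mul, hxt, hx2]
    rcases eq_one_or_negOne_of_mem_zpowers hmem with h1 | h1
    · exfalso
      rcases sq_eq_one_cases h1 with h2 | h2
      · exact hxne1 (by rw [← hxt, h2, _root_.map_one])
      · exact hxne1 (by rw [← hxt, h2, piSU2_negOne])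
    · exact h1
  have hyt2 : yt * yt = negOne := by
    have hmem : yt * yt ∈ Subgroup.zpowers negOne := by
      rw [← piSU2_eq_one_iff, _root_.map_mul, hyt, hy2]
    rcases eq_one_or_negOne_of_mem_zpowers hmem with h1 | h1
    · exfalso
      rcases sq_eq_one_cases h1 with h2 | h2
      · exact hyne1 (by rw [← hyt, h2, _root_.map_one])
      · exact hyne1 (by rw [← hyt, h2, piSU2_negOne])
    · exact h1
  -- the commutator lies in {1, negOne}
  have hcmem : ⁅xt, yt⁆ ∈ Subgroup.zpowers negOne := by
    rw [← piSU2_eq_one_iff, map_commutatorElement, hxt, hyt]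
    exact commutatorElement_eq_one_iff_mul_comm.mpr hcomm
  rcases eq_one_or_negOne_of_mem_zpowers hcmem with h1 | h1
  · -- if the commutator is 1, then xt and yt commute; derive a contradiction
    exfalso
    have hcm : xt * yt = yt * xt := commutatorElement_eq_one_iff_mul_comm.mp h1
    have hX2 : matOf xt * matOf xt = -1 := by rw [← matOf_mul, hxt2, matOf_negOne]
    have htX := trace_eq_zero_of_sq_eq_negOne hxt2
    have htY := trace_eq_zero_of_sq_eq_negOne hyt2
    have hXYc : matOf xt * matOf yt = matOf yt * matOf xt := by
      rw [← matOf_mul, ← matOf_mul, hcm]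
    have hpol := polar2 (matOf xt) (matOf yt) htX htY
    rw [← hXYc] at hpol
    set s : ℂ := Matrix.trace (matOf xt * matOf yt) with hs
    -- 2 • (X*Y) = s • 1
    have h2XY : (2 : ℂ) • (matOf xt * matOf yt) = s • 1 := by
      rw [two_smul]; exact hpol
    -- multiply on the left by X
    have hY : (2 : ℂ) • matOf yt = (-s) • matOf xt := by
      have := congrArg (fun N => matOf xt * N) h2XY
      simp only [Matrix.mul_smul] at this
      rw [← Matrix.mul_assoc, hX2, mul_one] at this
      have h' : (2 : ℂ) • (-(matOf yt)) = s • matOf xt := by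
        simpa using this
      calc (2 : ℂ) • matOf yt = -((2 : ℂ) • (-(matOf yt))) := by simp
        _ = -(s • matOf xt) := by rw [h']
        _ = (-s) • matOf xt := by rw [neg_smul]
    -- take determinants
    have hs2 : s * s = 2 * 2 := by
      have hdY := congrArg Matrix.det hY
      rw [Matrix.det_smul, Matrix.det_smul, detOf, detOf] at hdY
      simpa [Fintype.card_fin, sq, smul_eq_mul] using hdY.symm
    -- Y = c • X with c = -s/2 and c² = 1
    have hYval : matOf yt = ((2:ℂ)⁻¹ * (-s)) • matOf xt := by
      have h' := congrArg (fun N => (2:ℂ)⁻¹ • N) hY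
      simpa [smul_smul, inv_mul_cancel₀ (two_ne_zero (α := ℂ))] using h'
    set c : ℂ := (2:ℂ)⁻¹ * (-s) with hcdef
    have hc2 : c * c = 1 := by
      have : c * c = ((2:ℂ)⁻¹ * (2:ℂ)⁻¹) * (s * s) := by ring
      rw [this, hs2]
      norm_num
    rcases complex_sq_cases hc2 with h2 | h2
    · -- yt = xt, so y = x
      apply hxy
      have : yt = xt := by
        apply matOf_injective
        rw [hYval, h2, one_smul]
      rw [← hxt, ← hyt, this]
    · -- yt = negOne * xt, so y = x
      apply hxy
      have : yt = negOne * xt := by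
        apply matOf_injective
        rw [hYval, h2, matOf_mul, matOf_negOne]
        simp
      rw [← hxt, ← hyt, this, _root_.map_mul, piSU2_negOne, one_mul]
  · exact h1
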